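/- Let I be a monomial ideal with a regular linear quotient, u ∈ G(I), and fix σ ⊆ 𝔮(u). For δ ⊆ σ define c_σ(δ) to be the largest subset τ of σ with 𝔤(δ;u) = 𝔤(τ;u). Then (σ, c_σ) is a convex geometry: c_σ is a closure operator on σ satisfying the anti-exchange axiom. -/

import Mathlib

namespace CGRAux

def ms {n m : ℕ} (u : Fin m → Fin n → ℕ) (j : Fin m) (τ : Finset (Fin n)) : Fin n → ℕ :=
  fun t => u j t + if t ∈ τ then 1 else 0

theorem ms_mono {n m : ℕ} (u : Fin m → Fin n → ℕ) (j : Fin m) {τ τ' : Finset (Fin n)}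
    (h : τ ⊆ τ') : ∀ t, ms u j τ t ≤ ms u j τ' t := by
  intro t
  unfold ms
  by_cases ht : t ∈ τ
  · simp [ht, h ht]
  · simp [ht]

theorem ms_exists {n m : ℕ} (u : Fin m → Fin n → ℕ) (j : Fin m) (τ : Finset (Fin n)) :
    ∃ i, ∀ t, u i t ≤ ms u j τ t :=
  ⟨j, fun _ => Nat.le_add_right _ _⟩

section

variable {n m : ℕ} (u : Fin m → Fin n → ℕ) (q : Fin m → Finset (Fin n))
  (g : (Fin n → ℕ) → Fin m)
  (hq : ∀ j : Fin m, ∀ w : Fin n → ℕ,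
      ((∃ i, i < j ∧ ∀ t, u i t ≤ w t + u j t) ↔ ∃ x ∈ q j, 1 ≤ w x))
  (hg : ∀ v : Fin n → ℕ, (∃ i, ∀ t, u i t ≤ v t) →
      ((∀ t, u (g v) t ≤ v t) ∧ ∀ i, (∀ t, u i t ≤ v t) → g v ≤ i))
  (hreg : ∀ j : Fin m, ∀ y ∈ q j,
      q (g (fun t => u j t + if t = y then 1 else 0)) ⊆ q j)
  (j : Fin m)

include hg in
theorem G_div (τ : Finset (Fin n)) : ∀ t, u (g (ms u j τ)) t ≤ ms u j τ t :=
  (hg _ (ms_exists u j τ)).1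

include hg in
theorem G_min (τ : Finset (Fin n)) (i : Fin m) (h : ∀ t, u i t ≤ ms u j τ t) :
    g (ms u j τ) ≤ i :=
  (hg _ (ms_exists u j τ)).2 i h

include hg in
theorem G_anti {τ τ' : Finset (Fin n)} (h : τ ⊆ τ') : g (ms u j τ') ≤ g (ms u j τ) :=
  G_min u g hg j τ' _ (fun t => (G_div u g hg j τ t).trans (ms_mono u j h t))

include hq hg hreg in
/-- The key exchange step: if `y` is absorbed by `δ` then it is absorbed by `insert a δ`. -/
theorem k2s (δ : Finset (Fin n)) (a y : Fin n)
    (hy : g (ms u j (insert y δ)) = g (ms u j δ)) :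
    g (ms u j (insert y (insert a δ))) = g (ms u j (insert a δ)) := by
  by_cases hymem : y ∈ insert a δ
  · rw [Finset.insert_eq_self.mpr hymem]
  have hyδ : y ∉ δ := fun h => hymem (Finset.mem_insert_of_mem h)
  set i := g (ms u j (insert y (insert a δ))) with hi
  set P := g (ms u j (insert a δ)) with hP
  set p := g (ms u j δ) with hp
  have hiP : i ≤ P := G_anti u g hg j (Finset.subset_insert _ _)
  rcases eq_or_lt_of_le hiP with heq | hlt
  · exact heq
  exfalso
  have hPp : P ≤ p := G_anti u g hg j (Finset.subset_insert _ _)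
  have hip : i < p := lt_of_lt_of_le hlt hPp
  -- divisor facts
  have hidiv : ∀ t, u i t ≤ ms u j (insert y (insert a δ)) t := G_div u g hg j _
  have hpdiv : ∀ t, u p t ≤ ms u j δ t := G_div u g hg j _
  -- the descent
  have descent : ∀ (N : ℕ) (r : Fin m), (r : ℕ) ≤ N →
      (∀ t, u r t ≤ ms u j (insert a δ) t) → q r ⊆ q p → i < r → False := by
    intro N
    induction N with
    | zero =>
      intro r hr _ _ hir
      have := Fin.lt_iff_val_lt_val.mp hir
      omega
    | succ N ih =>
      intro r hrN hr1 hr2 hir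
      have hrB : ∀ t, u r t ≤ ms u j (insert y (insert a δ)) t := fun t =>
        (hr1 t).trans (ms_mono u j (Finset.subset_insert _ _) t)
      -- apply hq at r with w = B - u r
      obtain ⟨x, hxqr, hwx⟩ := (hq r (fun t => ms u j (insert y (insert a δ)) t - u r t)).mp
        ⟨i, hir, fun t => by have h1 := hidiv t; have h2 := hrB t; omega⟩
      have hxlt : u r x < ms u j (insert y (insert a δ)) x := by
        have := hrB x; omega
      -- r' = g (u_r · x)
      set r' := g (fun t => u r t + if t = x then 1 else 0) with hr'
      have hex' : ∃ i', ∀ t, u i' t ≤ u r t + if t = x then 1 else 0 :=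
        ⟨r, fun t => Nat.le_add_right _ _⟩
      have hr'div : ∀ t, u r' t ≤ u r t + if t = x then 1 else 0 := (hg _ hex').1
      have hr'r : r' < r := by
        obtain ⟨i', hi'r, hi'⟩ := (hq r (fun t => if t = x then 1 else 0)).mpr
          ⟨x, hxqr, by simp⟩
        exact lt_of_le_of_lt ((hg _ hex').2 i' (fun t => by have := hi' t; omega)) hi'r
      have hqr' : q r' ⊆ q r := hreg r x hxqr
      -- what remains after establishing the new invariant
      have step : (∀ t, u r' t ≤ ms u j (insert a δ) t) → False := by
        intro h1'
        refine ih r' ?_ h1' (hqr'.trans hr2) ?_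
        · have h1 := Fin.lt_iff_val_lt_val.mp hr'r; omega
        · exact lt_of_lt_of_le hlt (G_min u g hg j _ r' h1')
      by_cases hcase : u j x ≤ u r x
      · -- then x ∈ insert y (insert a δ) and u r x = u j x
        have hxmem : x ∈ insert y (insert a δ) := by
          by_contra hxm
          have : ms u j (insert y (insert a δ)) x = u j x := by simp [ms, hxm]
          omega
        have hrx : u r x = u j x := by
          have : ms u j (insert y (insert a δ)) x = u j x + 1 := by simp [ms, hxmem]
          omega
        by_cases hxa : x ∈ insert a δ
        · -- case β: recurse
          refine step (fun t => ?_)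
          by_cases ht : t = x
          · subst ht
            have h4 : ms u j (insert a δ) t = u j t + 1 := by simp [ms, hxa]
            have h3 : u r' t ≤ u r t + 1 := by simpa using hr'div t
            omega
          · have h3 := hr'div t
            simp only [if_neg ht] at h3
            exact h3.trans (hr1 t)
        · -- case γ: x = y, contradiction with hy
          have hxy : x = y := by
            rcases Finset.mem_insert.mp hxmem with h | h
            · exact h
            · exact absurd h hxa
          subst hxy
          have hyqp : x ∈ q p := hr2 hxqr
          set s := g (fun t => u p t + if t = x then 1 else 0) with hs
          have hexs : ∃ i', ∀ t, u i' t ≤ u p t + if t = x then 1 else 0 :=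
            ⟨p, fun t => Nat.le_add_right _ _⟩
          have hsdiv : ∀ t, u s t ≤ u p t + if t = x then 1 else 0 := (hg _ hexs).1
          have hsp : s < p := by
            obtain ⟨i', hi'p, hi'⟩ := (hq p (fun t => if t = x then 1 else 0)).mpr
              ⟨x, hyqp, by simp⟩
            exact lt_of_le_of_lt ((hg _ hexs).2 i' (fun t => by have := hi' t; omega)) hi'p
          have hsle : g (ms u j (insert x δ)) ≤ s := by
            refine G_min u g hg j _ s (fun t => ?_)
            have h3 := hsdiv t
            have h4 := hpdiv t
            by_cases ht : t = x
            · subst ht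
              have h5 : ms u j δ t = u j t := by simp [ms, hyδ]
              have h6 : ms u j (insert t δ) t = u j t + 1 := by simp [ms]
              have h7 : u s t ≤ u p t + 1 := by simpa using hsdiv t
              omega
            · have h6 : ms u j (insert x δ) t = ms u j δ t := by
                simp [ms, Finset.mem_insert, ht]
              simp only [if_neg ht] at h3
              omega
          rw [hy] at hsle
          exact absurd hsle (not_le.mpr hsp)
      · -- case α: u r x < u j x, recurse
        push_neg at hcase
        refine step (fun t => ?_)
        by_cases ht : t = x
        · subst ht
          have h3 : u r' t ≤ u r t + 1 := by simpa using hr'div t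
          have h4 : u j t ≤ ms u j (insert a δ) t := Nat.le_add_right _ _
          omega
        · have h3 := hr'div t
          simp only [if_neg ht] at h3
          exact h3.trans (hr1 t)
  -- initial invariant at r = p
  refine descent p p le_rfl (fun t => (hpdiv t).trans (ms_mono u j (Finset.subset_insert _ _) t))
    (fun _ h => h) hip


include hq hg hreg in
/-- Iterated version: an absorbed element stays absorbed after adding any finite set. -/
theorem k2s_iter (y : Fin n) (δ : Finset (Fin n))
    (hy : g (ms u j (insert y δ)) = g (ms u j δ)) (γ : Finset (Fin n)) :
    g (ms u j (insert y (δ ∪ γ))) = g (ms u j (δ ∪ γ)) := by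
  classical
  induction γ using Finset.induction_on with
  | empty => simpa using hy
  | insert _ _ _ ih =>
    rename_i a γ _
    rw [Finset.union_insert]
    exact k2s u q g hq hg hreg j (δ ∪ γ) a y ih

include hq hg hreg in
theorem unionEq (δ τ : Finset (Fin n)) (hδτ : δ ⊆ τ) (β : Finset (Fin n))
    (hβ : ∀ y ∈ β, g (ms u j (insert y δ)) = g (ms u j δ)) :
    g (ms u j (τ ∪ β)) = g (ms u j τ) := by
  classical
  induction β using Finset.induction_on with
  | empty => simp
  | insert _ _ _ ih =>
    rename_i y β _
    have h1 : g (ms u j (τ ∪ β)) = g (ms u j τ) :=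
      ih (fun z hz => hβ z (Finset.mem_insert_of_mem hz))
    have h2 : g (ms u j (insert y (δ ∪ (τ ∪ β)))) = g (ms u j (δ ∪ (τ ∪ β))) :=
      k2s_iter u q g hq hg hreg j y δ (hβ y (Finset.mem_insert_self _ _)) (τ ∪ β)
    have h3 : δ ∪ (τ ∪ β) = τ ∪ β :=
      Finset.union_eq_right.mpr (hδτ.trans Finset.subset_union_left)
    rw [h3] at h2
    rw [Finset.union_insert, h2, h1]

end

end CGRAux

open CGRAux in
/-- Setup as in the paper.  For a fixed `σ ⊆ 𝔮(u_j)`, the operator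
`c_σ δ` = largest `τ ⊆ σ` with `𝔤(δ;u_j) = 𝔤(τ;u_j)` makes `(σ, c_σ)` a
convex geometry: `c_σ` is a closure operator satisfying anti-exchange. -/
theorem convex_geometry_restricted (n m : ℕ) (u : Fin m → Fin n → ℕ)
    (q : Fin m → Finset (Fin n)) (g : (Fin n → ℕ) → Fin m)
    (hq : ∀ j : Fin m, ∀ w : Fin n → ℕ,
      ((∃ i, i < j ∧ ∀ t, u i t ≤ w t + u j t) ↔ ∃ x ∈ q j, 1 ≤ w x))
    (hg : ∀ v : Fin n → ℕ, (∃ i, ∀ t, u i t ≤ v t) →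
      ((∀ t, u (g v) t ≤ v t) ∧ ∀ i, (∀ t, u i t ≤ v t) → g v ≤ i))
    (hreg : ∀ j : Fin m, ∀ y ∈ q j,
      q (g (fun t => u j t + if t = y then 1 else 0)) ⊆ q j)
    (j : Fin m) (σ : Finset (Fin n)) (hσ : σ ⊆ q j)
    (c : Finset (Fin n) → Finset (Fin n))
    (hc : ∀ δ, δ ⊆ σ → (c δ ⊆ σ ∧
      g (fun t => u j t + if t ∈ c δ then 1 else 0)
        = g (fun t => u j t + if t ∈ δ then 1 else 0) ∧
      ∀ τ, τ ⊆ σ →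
        g (fun t => u j t + if t ∈ τ then 1 else 0)
          = g (fun t => u j t + if t ∈ δ then 1 else 0) → τ ⊆ c δ)) :
    (∀ δ, δ ⊆ σ → δ ⊆ c δ) ∧
    (∀ δ τ, δ ⊆ τ → τ ⊆ σ → c δ ⊆ c τ) ∧
    (∀ δ, δ ⊆ σ → c (c δ) = c δ) ∧
    (∀ δ, δ ⊆ σ → ∀ a ∈ σ, ∀ b ∈ σ, a ≠ b →
      a ∉ c δ → b ∉ c δ → a ∈ c (insert b δ) → b ∉ c (insert a δ)) := by
  classical
  have ext : ∀ δ, δ ⊆ σ → δ ⊆ c δ := fun δ hδ => (hc δ hδ).2.2 δ hδ rfl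
  refine ⟨ext, ?_, ?_, ?_⟩
  · -- monotonicity
    intro δ τ hδτ hτσ
    have hδσ : δ ⊆ σ := hδτ.trans hτσ
    obtain ⟨hcδσ, hcδG, _⟩ := hc δ hδσ
    obtain ⟨hcτσ, hcτG, hcτmax⟩ := hc τ hτσ
    have hext := ext δ hδσ
    have hper : ∀ y ∈ c δ, g (ms u j (insert y δ)) = g (ms u j δ) := by
      intro y hy
      have h1 : g (ms u j (insert y δ)) ≤ g (ms u j δ) :=
        G_anti u g hg j (Finset.subset_insert _ _)
      have h2 : g (ms u j (c δ)) ≤ g (ms u j (insert y δ)) :=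
        G_anti u g hg j (Finset.insert_subset hy hext)
      have h3 : g (ms u j (c δ)) = g (ms u j δ) := hcδG
      exact le_antisymm h1 (h3 ▸ h2)
    have hun : g (ms u j (τ ∪ c δ)) = g (ms u j τ) :=
      unionEq u q g hq hg hreg j δ τ hδτ (c δ) hper
    have hsub : τ ∪ c δ ⊆ σ := Finset.union_subset hτσ hcδσ
    have hfin := hcτmax (τ ∪ c δ) hsub hun
    exact fun y hy => hfin (Finset.mem_union_right _ hy)
  · -- idempotence
    intro δ hδ
    obtain ⟨hcδσ, hcδG, hmax⟩ := hc δ hδ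
    obtain ⟨hccσ, hccG, hmax2⟩ := hc (c δ) hcδσ
    exact Finset.Subset.antisymm (hmax (c (c δ)) hccσ (hccG.trans hcδG)) (hmax2 (c δ) hcδσ rfl)
  · -- anti-exchange
    intro δ hδ a ha b hb hab hacδ hbcδ hacb hbca
    have haσ : insert a δ ⊆ σ := Finset.insert_subset ha hδ
    have hbσ : insert b δ ⊆ σ := Finset.insert_subset hb hδ
    obtain ⟨hCaσ, hCaG, hCamax⟩ := hc (insert a δ) haσ
    obtain ⟨hCbσ, hCbG, hCbmax⟩ := hc (insert b δ) hbσ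
    obtain ⟨hcδσ, hcδG, hcδmax⟩ := hc δ hδ
    have haδ : a ∉ δ := fun h => hacδ (ext δ hδ h)
    have hbδ : b ∉ δ := fun h => hbcδ (ext δ hδ h)
    have h1 : insert a δ ⊆ c (insert b δ) :=
      Finset.insert_subset hacb ((Finset.subset_insert b δ).trans (ext _ hbσ))
    have h2 : insert b δ ⊆ c (insert a δ) :=
      Finset.insert_subset hbca ((Finset.subset_insert a δ).trans (ext _ haσ))
    have e1 : g (ms u j (insert b δ)) ≤ g (ms u j (insert a δ)) := by
      have h4 : g (ms u j (c (insert b δ))) ≤ g (ms u j (insert a δ)) :=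
        G_anti u g hg j h1
      have h5 : g (ms u j (c (insert b δ))) = g (ms u j (insert b δ)) := hCbG
      exact h5 ▸ h4
    have e2 : g (ms u j (insert a δ)) ≤ g (ms u j (insert b δ)) := by
      have h4 : g (ms u j (c (insert a δ))) ≤ g (ms u j (insert b δ)) :=
        G_anti u g hg j h2
      have h5 : g (ms u j (c (insert a δ))) = g (ms u j (insert a δ)) := hCaG
      exact h5 ▸ h4
    have e : g (ms u j (insert a δ)) = g (ms u j (insert b δ)) := le_antisymm e2 e1
    -- strictness: G (insert a δ) < G δ
    have hle : g (ms u j (insert a δ)) ≤ g (ms u j δ) :=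
      G_anti u g hg j (Finset.subset_insert _ _)
    have hne : g (ms u j (insert a δ)) ≠ g (ms u j δ) := by
      intro hEq
      exact hacδ (hcδmax (insert a δ) haσ hEq (Finset.mem_insert_self _ _))
    have hlt : g (ms u j (insert a δ)) < g (ms u j δ) := lt_of_le_of_ne hle hne
    -- but `u (G (insert a δ))` divides `u_j · x^δ`, so `G δ ≤ G (insert a δ)`
    have hge : g (ms u j δ) ≤ g (ms u j (insert a δ)) := by
      refine G_min u g hg j δ _ (fun t => ?_)
      have d1 := G_div u g hg j (insert a δ) t
      have d2 : u (g (ms u j (insert a δ))) t ≤ ms u j (insert b δ) t := by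
        rw [e]; exact G_div u g hg j (insert b δ) t
      by_cases hta : t = a
      · subst hta
        have hmem : (t ∈ insert b δ) = (t ∈ δ) := by
          simp [Finset.mem_insert, hab]
        simpa [ms, hmem] using d2
      · have hmem : (t ∈ insert a δ) = (t ∈ δ) := by
          simp [Finset.mem_insert, hta]
        simpa [ms, hmem] using d1
    exact absurd hge (not_le.mpr hlt)
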